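/- A partition λ with exactly k parts is (k,k)-legal (i.e., the non-skew Schur polynomial S_λ arises as a k×k minor of A_k) if and only if λ_1 ≤ n-k+1 and λ_k ≥ k. -/

import Mathlib

open Matrix
open MvPolynomial Finsupp

/-- Formal algebraically independent variables `h_1, …, h_n`, with `h_0 = 1` and
`h_d = 0` for `d < 0` or `d > n`. -/
noncomputable def Hf (n : ℕ) (d : ℤ) : MvPolynomial ℕ ℤ :=
  if d = 0 then 1 else if 1 ≤ d ∧ d ≤ (n : ℤ) then MvPolynomial.X d.toNat else 0

/-- The `n × n` lower triangular Toeplitz matrix `T(i,j) = h_{n-i+j}` (1-indexed, `i ≥ j`). -/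
noncomputable def ToepH (n : ℕ) : Matrix (Fin n) (Fin n) (MvPolynomial ℕ ℤ) :=
  Matrix.of fun i j =>
    if (j : ℕ) ≤ (i : ℕ) then Hf n ((n : ℤ) - ((i : ℕ) + 1) + ((j : ℕ) + 1)) else 0

/-- The `(n-c+1) × c` submatrix `A_c` on columns `1,…,c` and rows `c,…,n`. -/
noncomputable def AcH (n c : ℕ) (hc1 : 1 ≤ c) (hcn : c ≤ n) :
    Matrix (Fin (n - c + 1)) (Fin c) (MvPolynomial ℕ ℤ) :=
  (ToepH n).submatrix
    (fun i => ⟨c - 1 + (i : ℕ), by have := i.isLt; omega⟩)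
    (fun j => ⟨(j : ℕ), by have := j.isLt; omega⟩)

/-- The skew Schur polynomial `S_{λ/μ} = det(h_{λ_i - μ_j - i + j})` (Jacobi–Trudi),
for `λ, μ` with `k` rows (0-indexed here, which gives the same determinant). -/
noncomputable def skewSchur (n k : ℕ) (lam mu : Fin k → ℕ) : MvPolynomial ℕ ℤ :=
  (Matrix.of fun i j : Fin k =>
    Hf n ((lam i : ℤ) - (mu j : ℤ) - ((i : ℕ) + 1) + ((j : ℕ) + 1))).det

/-- `λ/μ` is `(k,c)`-legal: `S_{λ/μ}` equals some `k × k` minor of `A_c`. -/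
def IsLegal (n k c : ℕ) (hc1 : 1 ≤ c) (hcn : c ≤ n) (lam mu : Fin k → ℕ) : Prop :=
  ∃ (f : Fin k → Fin (n - c + 1)) (g : Fin k → Fin c),
    StrictMono f ∧ StrictMono g ∧
    skewSchur n k lam mu = ((AcH n c hc1 hcn).submatrix f g).det

noncomputable def wt (d : ℤ) : ℕ →₀ ℕ :=
  if d = 0 then 0 else Finsupp.single d.toNat 1

lemma hf_monomial (n : ℕ) (d : ℤ) (h0 : 0 ≤ d) (hn : d ≤ (n:ℤ)) :
    Hf n d = MvPolynomial.monomial (wt d) 1 := by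
  unfold Hf wt
  by_cases h : d = 0
  · simp [h]
  · rw [if_neg h, if_neg h, if_pos ⟨by omega, hn⟩, X]

lemma hf_zero (n : ℕ) (d : ℤ) (h : ¬ (0 ≤ d ∧ d ≤ (n:ℤ))) : Hf n d = 0 := by
  unfold Hf
  rw [if_neg (by omega), if_neg (by omega)]

lemma prod_monomial {ι : Type*} (s : Finset ι) (f : ι → (ℕ →₀ ℕ)) :
    (∏ i ∈ s, (MvPolynomial.monomial (f i) (1:ℤ))) = MvPolynomial.monomial (∑ i ∈ s, f i) 1 := by
  induction s using Finset.cons_induction with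
  | empty => simp
  | cons a s ha ih => rw [Finset.prod_cons, ih, Finset.sum_cons, monomial_mul, one_mul]

lemma prod_hf {k : ℕ} (n : ℕ) (v : Fin k → ℤ) (h : ∀ i, 0 ≤ v i ∧ v i ≤ (n:ℤ)) :
    (∏ i, Hf n (v i)) = MvPolynomial.monomial (∑ i, wt (v i)) 1 := by
  rw [← prod_monomial]
  exact Finset.prod_congr rfl fun i _ => hf_monomial n (v i) (h i).1 (h i).2

noncomputable def ell (q : ℕ → ℤ) : (ℕ →₀ ℕ) →+ ℤ :=
  Finsupp.liftAddHom (fun a => AddMonoidHom.mk' (fun c : ℕ => (c : ℤ) * q a)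
    (by intro b c; push_cast; ring))

lemma ell_single (q : ℕ → ℤ) (a : ℕ) (c : ℕ) :
    ell q (Finsupp.single a c) = (c : ℤ) * q a := by
  simp [ell, Finsupp.liftAddHom_apply_single]

lemma ell_wt (q : ℕ → ℤ) (d : ℤ) :
    ell q (wt d) = if d = 0 then 0 else q d.toNat := by
  unfold wt
  split_ifs with h
  · simp
  · rw [ell_single]; simp

/-- Analysis of one determinant term's contribution to the target monomial. -/
lemma term_coeff {k n : ℕ} (v p : Fin k → ℤ)
    (h : MvPolynomial.coeff (∑ i, Finsupp.single (p i).toNat 1) (∏ i, Hf n (v i)) ≠ 0) :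
    (∀ i, 1 ≤ v i ∧ v i ≤ (n:ℤ)) ∧
      (∑ i, Finsupp.single (v i).toNat (1:ℕ)) = ∑ i, Finsupp.single (p i).toNat 1 := by
  by_cases hr : ∀ i, 0 ≤ v i ∧ v i ≤ (n:ℤ)
  · rw [prod_hf n v hr, MvPolynomial.coeff_monomial] at h
    split_ifs at h with heq
    · -- heq : ∑ wt (v i) = ∑ single (p i).toNat 1
      -- show all v i ≠ 0
      have hsum : ∑ i, ell (fun _ => 1) (wt (v i)) = (k : ℤ) := by
        rw [← map_sum, heq, map_sum]
        simp [ell_single]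
      have hle : ∀ i : Fin k, ell (fun _ => 1) (wt (v i)) ≤ 1 := by
        intro i; rw [ell_wt]; split_ifs <;> norm_num
      have hne : ∀ i : Fin k, v i ≠ 0 := by
        by_contra hc
        push_neg at hc
        obtain ⟨i0, hi0⟩ := hc
        have : ∑ i, ell (fun _ => 1) (wt (v i)) < ∑ _i : Fin k, (1:ℤ) :=
          Finset.sum_lt_sum (fun i _ => hle i)
            ⟨i0, Finset.mem_univ i0, by rw [ell_wt, if_pos hi0]; norm_num⟩
        simp only [Finset.sum_const, Finset.card_univ, Fintype.card_fin, smul_eq_mul, nsmul_eq_mul, mul_one] at this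
        omega
      have hv1 : ∀ i, 1 ≤ v i ∧ v i ≤ (n:ℤ) := fun i => ⟨by have := (hr i).1; have := hne i; omega, (hr i).2⟩
      refine ⟨hv1, ?_⟩
      rw [← heq]
      refine Finset.sum_congr rfl fun i _ => ?_
      unfold wt
      rw [if_neg (hne i)]
    · exact absurd rfl h
  · push_neg at hr
    obtain ⟨i, hi⟩ := hr
    exfalso
    apply h
    rw [Finset.prod_eq_zero (Finset.mem_univ i) (hf_zero n (v i) (fun hc => absurd hc.2 (not_le.2 (hi hc.1)))), MvPolynomial.coeff_zero]

lemma strictMono_add_le {k : ℕ} (g : Fin k → ℕ) (hg : StrictMono g) :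
    ∀ d : ℕ, ∀ i j : Fin k, (j:ℕ) = (i:ℕ) + d → g i + d ≤ g j := by
  intro d
  induction d with
  | zero =>
    intro i j hij
    have h : i = j := Fin.ext (by omega)
    subst h
    omega
  | succ d ih =>
    intro i j hij
    have hj' : (i:ℕ) + d < k := by have := j.isLt; omega
    have h1 := ih i ⟨(i:ℕ) + d, hj'⟩ rfl
    have h2 : g ⟨(i:ℕ) + d, hj'⟩ < g j := hg (by rw [Fin.lt_def]; simp; omega)
    omega

lemma strictMono_fin_id {k : ℕ} (g : Fin k → Fin k) (hg : StrictMono g) (i : Fin k) :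
    g i = i := by
  have hk : 0 < k := i.pos
  have hg' : StrictMono fun a : Fin k => ((g a : ℕ)) := fun a b h => hg h
  set j₁ : Fin k := ⟨k - 1, by omega⟩ with hj₁
  have h1 := strictMono_add_le _ hg' (i:ℕ) ⟨0, hk⟩ i (by simp)
  have h2 := strictMono_add_le _ hg' (k - 1 - (i:ℕ)) i j₁ (by rw [hj₁]; simp; omega)
  have h3 := (g i).isLt
  have h4 := (g j₁).isLt
  have h5 := i.isLt
  exact Fin.ext (by omega)

/-- Lemma A: the coefficient of the target monomial in the "own" determinant is 1. -/
lemma coeff_det_eq_one {k n : ℕ} (b : Fin k → ℤ) (hb : StrictAnti b)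
    (h1 : ∀ i : Fin k, 1 ≤ b i + (i:ℤ)) (hn : ∀ i : Fin k, b i + (i:ℤ) ≤ (n:ℤ)) :
    MvPolynomial.coeff (∑ i, Finsupp.single (b i + (i:ℤ)).toNat 1)
      (Matrix.of fun i j : Fin k => Hf n (b i + ((j:ℕ):ℤ))).det = 1 := by
  set m : ℕ →₀ ℕ := ∑ i, Finsupp.single (b i + (i:ℤ)).toNat 1 with hm
  rw [Matrix.det_apply, MvPolynomial.coeff_sum]
  rw [Finset.sum_eq_single (1 : Equiv.Perm (Fin k))]
  · simp only [Equiv.Perm.sign_one, one_smul, Matrix.of_apply, Equiv.Perm.one_apply]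
    have hmeq : ∑ i : Fin k, wt (b i + (i:ℤ)) = m := by
      rw [hm]
      refine Finset.sum_congr rfl fun i _ => ?_
      unfold wt
      rw [if_neg (by have := h1 i; omega)]
    rw [prod_hf n _ (fun i => ⟨by have := h1 i; omega, hn i⟩), MvPolynomial.coeff_monomial,
      if_pos hmeq]
  · intro σ _ hσ
    simp only [Matrix.of_apply]
    rw [Units.smul_def, MvPolynomial.coeff_smul]
    rcases eq_or_ne (MvPolynomial.coeff m (∏ i, Hf n (b (σ i) + ((i:ℕ):ℤ)))) 0 with hc | hc
    · rw [hc, smul_zero]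
    · exfalso
      obtain ⟨hv, heq⟩ := term_coeff (fun i => b (σ i) + (i:ℤ)) (fun i => b i + (i:ℤ)) hc
      -- moment computation with q = t^2
      have hmom : ∑ i : Fin k, (b (σ i) + (i:ℤ))^2 = ∑ i : Fin k, (b i + (i:ℤ))^2 := by
        have := congrArg (ell (fun t => (t:ℤ) * t)) heq
        rw [map_sum, map_sum] at this
        simp only [ell_single, Nat.cast_one, one_mul] at this
        calc ∑ i : Fin k, (b (σ i) + (i:ℤ))^2
            = ∑ i : Fin k, (((b (σ i) + (i:ℤ)).toNat : ℤ) * ((b (σ i) + (i:ℤ)).toNat : ℤ)) := by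
              refine Finset.sum_congr rfl fun i _ => ?_
              rw [Int.toNat_of_nonneg (by have := (hv i).1; omega)]; ring
          _ = ∑ i : Fin k, (((b i + (i:ℤ)).toNat : ℤ) * ((b i + (i:ℤ)).toNat : ℤ)) := this
          _ = ∑ i : Fin k, (b i + (i:ℤ))^2 := by
              refine Finset.sum_congr rfl fun i _ => ?_
              rw [Int.toNat_of_nonneg (by have := h1 i; omega)]; ring
      have hsq : ∑ i : Fin k, (b (σ i))^2 = ∑ i : Fin k, (b i)^2 :=
        Equiv.sum_comp σ (fun i => (b i)^2)
      have hcross : ∑ i : Fin k, b (σ i) * (i:ℤ) = ∑ i : Fin k, b i * (i:ℤ) := by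
        have e1 : ∀ (c : Fin k → ℤ), ∑ i : Fin k, (c i + (i:ℤ))^2
            = ∑ i : Fin k, (c i)^2 + 2 * ∑ i : Fin k, c i * (i:ℤ) + ∑ i : Fin k, ((i:ℕ):ℤ)^2 := by
          intro c
          rw [Finset.mul_sum, ← Finset.sum_add_distrib, ← Finset.sum_add_distrib]
          exact Finset.sum_congr rfl fun i _ => by ring
        have := hmom
        rw [e1 (fun i => b (σ i)), e1 b, hsq] at this
        linarith
      -- rearrangement equality case
      have hA : Antivary b (fun i : Fin k => ((i:ℕ):ℤ)) := by
        intro i j hij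
        have hij' : ((i:ℕ):ℤ) < ((j:ℕ):ℤ) := hij
        exact (hb (show i < j by exact_mod_cast hij')).le
      have hA2 : Antivary (b ∘ σ) (fun i : Fin k => ((i:ℕ):ℤ)) :=
        (hA.sum_comp_perm_mul_eq_sum_mul_iff).1 hcross
      have hsm : StrictMono σ := by
        intro i j hij
        have h3 : b (σ j) ≤ b (σ i) := hA2 (show ((i:ℕ):ℤ) < ((j:ℕ):ℤ) by exact_mod_cast hij)
        have h4 : σ i ≠ σ j := fun hc => absurd (σ.injective hc) (ne_of_lt hij)
        rcases lt_or_ge (σ i) (σ j) with h | h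
        · exact h
        · exact absurd (hb (lt_of_le_of_ne h (Ne.symm h4))) (not_lt.2 h3)
      exact hσ (Equiv.ext fun i => strictMono_fin_id σ hsm i)
  · intro h; exact absurd (Finset.mem_univ _) h

/-- Lemma B: nonzero coefficient forces a permutation matching. -/
lemma coeff_det_ne_zero {k n : ℕ} (b p : Fin k → ℤ) (hp1 : ∀ i, 1 ≤ p i)
    (h : MvPolynomial.coeff (∑ i, Finsupp.single (p i).toNat 1)
      ((Matrix.of fun i j : Fin k => Hf n (b i + ((j:ℕ):ℤ))).det) ≠ 0) :
    ∃ σ : Equiv.Perm (Fin k), ∀ i, ∃ j, b (σ i) + (i:ℤ) = p j := by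
  rw [Matrix.det_apply, MvPolynomial.coeff_sum] at h
  obtain ⟨σ, _, hσ⟩ := Finset.exists_ne_zero_of_sum_ne_zero h
  simp only [Matrix.of_apply, Units.smul_def, MvPolynomial.coeff_smul] at hσ
  have hc : MvPolynomial.coeff (∑ i, Finsupp.single (p i).toNat 1)
      (∏ i, Hf n (b (σ i) + ((i:ℕ):ℤ))) ≠ 0 := fun hcon => by
    rw [hcon, smul_zero] at hσ; exact hσ rfl
  obtain ⟨hv, heq⟩ := term_coeff (fun i => b (σ i) + (i:ℤ)) p hc
  refine ⟨σ, fun i => ?_⟩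
  have happ := congrArg (fun μ : ℕ →₀ ℕ => μ ((b (σ i) + (i:ℤ)).toNat)) heq
  simp only [Finsupp.finset_sum_apply, Finsupp.single_apply] at happ
  by_contra hno
  push_neg at hno
  have hrhs : ∑ j : Fin k, (if (p j).toNat = (b (σ i) + (i:ℤ)).toNat then (1:ℕ) else 0) = 0 := by
    refine Finset.sum_eq_zero fun j _ => ?_
    rw [if_neg]
    intro hcon
    exact hno j (by
      have h1 := (hv i).1
      have h2 := hp1 j
      omega)
  have hlhs : (1:ℕ) ≤ ∑ j : Fin k, (if (b (σ j) + (j:ℤ)).toNat = (b (σ i) + (i:ℤ)).toNat then (1:ℕ) else 0) := by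
    calc (1:ℕ) = (if (b (σ i) + (i:ℤ)).toNat = (b (σ i) + (i:ℤ)).toNat then (1:ℕ) else 0) := by simp
    _ ≤ _ := Finset.single_le_sum
      (f := fun j : Fin k => (if (b (σ j) + (j:ℤ)).toNat = (b (σ i) + (i:ℤ)).toNat then (1:ℕ) else 0))
      (fun j _ => Nat.zero_le _) (Finset.mem_univ i)
  omega


/-- A partition `λ` with exactly `k` parts is `(k,k)`-legal (the non-skew Schur
polynomial `S_λ` arises as a `k × k` minor of `A_k`) iff `λ₁ ≤ n-k+1` and `λ_k ≥ k`. -/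
theorem stmt7 (n k : ℕ) (hk : 1 ≤ k) (hkn : k ≤ n)
    (lam : Fin k → ℕ) (hlam : Antitone lam) (hparts : 1 ≤ lam ⟨k - 1, by omega⟩) :
    IsLegal n k k (by omega) hkn lam (fun _ => 0) ↔
      ((lam ⟨0, by omega⟩ : ℤ) ≤ (n : ℤ) - k + 1 ∧
       (k : ℤ) ≤ (lam ⟨k - 1, by omega⟩ : ℤ)) := by
  have h0 : 0 < k := by omega
  have hk1 : k - 1 < k := by omega
  constructor
  · rintro ⟨f, g, hf, hg, hEq⟩
    have hf' : StrictMono fun a : Fin k => ((f a : ℕ)) := fun a b h => hf h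
    set bl : Fin k → ℤ := fun i => (lam i : ℤ) - ((i:ℕ):ℤ) with hbl
    set bn : Fin k → ℤ := fun i => (n:ℤ) - (k:ℤ) + 1 - ((f i : ℕ):ℤ) with hbn
    have hL : skewSchur n k lam (fun _ => 0)
        = (Matrix.of fun i j : Fin k => Hf n (bl i + ((j:ℕ):ℤ))).det := by
      unfold skewSchur
      congr 1
      refine Matrix.ext fun i j => ?_
      simp only [Matrix.of_apply, hbl]
      congr 1
      push_cast
      ring
    have hR : ((AcH n k (by omega) hkn).submatrix f g).det
        = (Matrix.of fun i j : Fin k => Hf n (bn i + ((j:ℕ):ℤ))).det := by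
      congr 1
      refine Matrix.ext fun i j => ?_
      rw [Matrix.submatrix_apply, strictMono_fin_id g hg j]
      simp only [Matrix.submatrix_apply, AcH, ToepH, Matrix.of_apply, hbn]
      rw [if_pos (by have := j.isLt; omega)]
      have hfi := (f i).isLt
      congr 1
      simp
      omega
    have hd : (Matrix.of fun i j : Fin k => Hf n (bl i + ((j:ℕ):ℤ))).det
        = (Matrix.of fun i j : Fin k => Hf n (bn i + ((j:ℕ):ℤ))).det := by
      rw [← hL, ← hR]; exact hEq
    have hp1 : ∀ i : Fin k, 1 ≤ bn i + (i:ℤ) := by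
      intro i
      have := (f i).isLt
      simp only [hbn]
      omega
    have hpn : ∀ i : Fin k, bn i + (i:ℤ) ≤ (n:ℤ) := by
      intro i
      have := i.isLt
      have : (0:ℕ) ≤ (f i : ℕ) := Nat.zero_le _
      simp only [hbn]
      omega
    have hanti : StrictAnti bn := by
      intro i j hij
      have : (f i : ℕ) < (f j : ℕ) := hf hij
      simp only [hbn]
      omega
    have h1 := coeff_det_eq_one (n := n) bn hanti hp1 hpn
    rw [← hd] at h1
    obtain ⟨σ, hσ⟩ := coeff_det_ne_zero (n := n) bl (fun i => bn i + (i:ℤ)) hp1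
      (by rw [h1]; norm_num)
    constructor
    · obtain ⟨j, hj⟩ := hσ (σ⁻¹ ⟨0, h0⟩)
      rw [Equiv.Perm.coe_inv, Equiv.apply_symm_apply] at hj
      have hfj := strictMono_add_le _ hf' (j:ℕ) ⟨0, h0⟩ j (by simp)
      simp only [hbl, hbn] at hj
      have hi0 : ((σ⁻¹ ⟨0, h0⟩ : Fin k) : ℕ) < k := (σ⁻¹ ⟨0, h0⟩).isLt
      show (lam ⟨0, h0⟩ : ℤ) ≤ (n:ℤ) - k + 1
      try simp only [Fin.val_mk] at hj hfj ⊢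
      omega
    · obtain ⟨j, hj⟩ := hσ (σ⁻¹ ⟨k - 1, hk1⟩)
      rw [Equiv.Perm.coe_inv, Equiv.apply_symm_apply] at hj
      have hjlt := j.isLt
      have hfj := strictMono_add_le _ hf' (k - 1 - (j:ℕ)) j ⟨k - 1, hk1⟩ (by simp; omega)
      have hfk := (f ⟨k - 1, hk1⟩).isLt
      simp only [hbl, hbn] at hj
      have hi1 : ((σ⁻¹ ⟨k - 1, hk1⟩ : Fin k) : ℕ) < k := (σ⁻¹ ⟨k - 1, hk1⟩).isLt
      show (k:ℤ) ≤ (lam ⟨k - 1, hk1⟩ : ℤ)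
      try simp only [Fin.val_mk] at hj hfj ⊢
      omega
  · rintro ⟨hle, hge⟩
    have hle' : (lam ⟨0, h0⟩ : ℤ) ≤ (n:ℤ) - k + 1 := hle
    have hge' : (k:ℤ) ≤ (lam ⟨k - 1, hk1⟩ : ℤ) := hge
    have hki : ∀ i : Fin k, k ≤ lam i := by
      intro i
      have h := hlam (show i ≤ ⟨k - 1, hk1⟩ from Fin.le_def.2
        (by exact (by have := i.isLt; omega : (i:ℕ) ≤ k - 1)))
      have : k ≤ lam ⟨k - 1, hk1⟩ := by exact_mod_cast hge'
      omega
    have hli : ∀ i : Fin k, lam i ≤ n - k + 1 := by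
      intro i
      have h := hlam (show (⟨0, h0⟩ : Fin k) ≤ i from Fin.le_def.2 (Nat.zero_le _))
      have : lam ⟨0, h0⟩ ≤ n - k + 1 := by omega
      omega
    refine ⟨fun i => ⟨n - k + 1 - (lam i - (i:ℕ)), by
        have := hki i
        have := hli i
        have := i.isLt
        omega⟩, id, ?_, strictMono_id, ?_⟩
    · intro i j hij
      have h1 := hki j
      have h2 := hli i
      have h3 := hlam hij.le
      have h4 := j.isLt
      have h5 : (i:ℕ) < (j:ℕ) := hij
      rw [Fin.lt_def]
      simp only [Fin.val_mk]
      omega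
    · unfold skewSchur AcH ToepH
      congr 1
      refine Matrix.ext fun i j => ?_
      simp only [Matrix.submatrix_apply, Matrix.of_apply, id_eq]
      rw [if_pos (by have := j.isLt; omega)]
      have h1 := hki i
      have h2 := hli i
      have h3 := i.isLt
      have h4 := j.isLt
      congr 1
      simp
      omega
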